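/- arXiv:0711.1157 — 6 statements merged into one kernel-verified Lean document; each statement's English description precedes it below -/
import Mathlib

section
/- For every edge of K_{2,3}, the graph obtained from K_{2,3} by deleting that edge is unit-distance embeddable: for every i₀ : Fin 2 and j₀ : Fin 3 there exists an injective map f : (Fin 2 ⊕ Fin 3) → ℝ² with dist (f (inl i)) (f (inr j)) = 1 for every pair (i, j) ≠ (i₀, j₀). -/
open Real

noncomputable def pt (a b : ℝ) : EuclideanSpace ℝ (Fin 2) :=
  (WithLp.equiv 2 (Fin 2 → ℝ)).symm ![a, b]

lemma pt_inj {a b c d : ℝ} (h : pt a b = pt c d) : a = c ∧ b = d :=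
  ⟨by simpa [pt] using congrArg (fun p : EuclideanSpace ℝ (Fin 2) => p 0) h,
    by simpa [pt] using congrArg (fun p : EuclideanSpace ℝ (Fin 2) => p 1) h⟩

lemma dist_pt (a b c d : ℝ) :
    dist (pt a b) (pt c d) = Real.sqrt ((a - c)^2 + (b - d)^2) := by
  rw [EuclideanSpace.dist_eq, Fin.sum_univ_two]
  simp [Real.dist_eq, sq_abs, pt]

lemma dist_pt_eq_one {a b c d : ℝ} (h : (a-c)^2+(b-d)^2 = 1) :
    dist (pt a b) (pt c d) = 1 := by rw [dist_pt, h, Real.sqrt_one]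

lemma one_lt_sqrt3 : (1:ℝ) < Real.sqrt 3 := by
  nlinarith [Real.sq_sqrt (show (0:ℝ) ≤ 3 by norm_num), Real.sqrt_nonneg 3]

lemma aux (j₀ : Fin 3) (Q : EuclideanSpace ℝ (Fin 2))
    (hQ0 : Q ≠ pt 0 0) (hQ1 : Q ≠ pt 1 0)
    (hQT : Q ≠ pt (1/2) (Real.sqrt 3/2)) (hQB : Q ≠ pt (1/2) (-(Real.sqrt 3/2))) :
    ∃ f : Fin 2 ⊕ Fin 3 → EuclideanSpace ℝ (Fin 2),
      Function.Injective f ∧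
      (∀ (i : Fin 2) (j : Fin 3), j ≠ j₀ → dist (f (Sum.inl i)) (f (Sum.inr j)) = 1) ∧
      f (Sum.inl 0) = pt 0 0 ∧ f (Sum.inl 1) = pt 1 0 ∧ f (Sum.inr j₀) = Q := by
  have h3 : Real.sqrt 3 ^ 2 = 3 := Real.sq_sqrt (by norm_num)
  have h1 := one_lt_sqrt3
  have d01 : pt 0 0 ≠ pt 1 0 := fun h => by have := pt_inj h; norm_num at this
  have d0T : pt 0 0 ≠ pt (1/2) (Real.sqrt 3/2) := fun h => by
    obtain ⟨ha, _⟩ := pt_inj h; norm_num at ha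
  have d0B : pt 0 0 ≠ pt (1/2) (-(Real.sqrt 3/2)) := fun h => by
    obtain ⟨ha, _⟩ := pt_inj h; norm_num at ha
  have d1T : pt 1 0 ≠ pt (1/2) (Real.sqrt 3/2) := fun h => by
    obtain ⟨ha, _⟩ := pt_inj h; norm_num at ha
  have d1B : pt 1 0 ≠ pt (1/2) (-(Real.sqrt 3/2)) := fun h => by
    obtain ⟨ha, _⟩ := pt_inj h; norm_num at ha
  have dTB : pt (1/2) (Real.sqrt 3/2) ≠ pt (1/2) (-(Real.sqrt 3/2)) := fun h => by
    obtain ⟨_, hb⟩ := pt_inj h; linarith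
  refine ⟨Sum.elim ![pt 0 0, pt 1 0]
      (fun j => ![pt (1/2) (Real.sqrt 3/2), pt (1/2) (-(Real.sqrt 3/2)), Q] (Equiv.swap j₀ 2 j)),
      ?_, ?_, rfl, rfl, by simp⟩
  · have hg : Function.Injective
        (Sum.elim ![pt 0 0, pt 1 0]
          ![pt (1/2) (Real.sqrt 3/2), pt (1/2) (-(Real.sqrt 3/2)), Q]) := by
      intro v w hvw
      rcases v with a | a <;> rcases w with b | b <;>
        simp only [Sum.elim_inl, Sum.elim_inr] at hvw <;>
        [skip; exfalso; exfalso; skip] <;>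
        fin_cases a <;> fin_cases b <;>
        simp only [Matrix.cons_val_zero, Matrix.cons_val_one, Matrix.head_cons,
          Matrix.cons_val_two, Matrix.tail_cons, Fin.isValue] at hvw <;>
        first
          | rfl
          | exact absurd hvw (by first
              | exact d01 | exact d01.symm | exact d0T | exact d0T.symm
              | exact d0B | exact d0B.symm | exact d1T | exact d1T.symm
              | exact d1B | exact d1B.symm | exact dTB | exact dTB.symm
              | exact hQ0 | exact hQ0.symm | exact hQ1 | exact hQ1.symm
              | exact hQT | exact hQT.symm | exact hQB | exact hQB.symm)
    have hcomp : (Sum.elim ![pt 0 0, pt 1 0]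
        (fun j => ![pt (1/2) (Real.sqrt 3/2), pt (1/2) (-(Real.sqrt 3/2)), Q] (Equiv.swap j₀ 2 j)))
        = (Sum.elim ![pt 0 0, pt 1 0]
            ![pt (1/2) (Real.sqrt 3/2), pt (1/2) (-(Real.sqrt 3/2)), Q])
          ∘ Sum.map id (Equiv.swap j₀ 2) := by
      funext v; cases v <;> rfl
    rw [hcomp]
    exact hg.comp (Function.Injective.sumMap (fun _ _ h => h) (Equiv.swap j₀ 2).injective)
  · intro i j hj
    simp only [Sum.elim_inl, Sum.elim_inr]
    have hk : Equiv.swap j₀ 2 j ≠ 2 := by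
      intro h
      exact hj (by simpa using congrArg (Equiv.swap j₀ 2) h)
    generalize Equiv.swap j₀ 2 j = k at hk
    fin_cases i <;> fin_cases k <;>
      simp only [Matrix.cons_val_zero, Matrix.cons_val_one, Matrix.head_cons,
        Matrix.cons_val_two, Matrix.tail_cons, Fin.isValue] <;>
      first
        | exact absurd rfl hk
        | (apply dist_pt_eq_one; linear_combination h3/4)

/-- For every edge of `K_{2,3}`, the graph obtained by deleting that edge is
unit-distance embeddable. -/
theorem k23_minus_edge_unit_distance_embeddable (i₀ : Fin 2) (j₀ : Fin 3) :
    ∃ f : Fin 2 ⊕ Fin 3 → EuclideanSpace ℝ (Fin 2),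
      Function.Injective f ∧
        ∀ (i : Fin 2) (j : Fin 3), (i, j) ≠ (i₀, j₀) →
          dist (f (Sum.inl i)) (f (Sum.inr j)) = 1 := by
  have h1 := one_lt_sqrt3
  fin_cases i₀
  · obtain ⟨f, hinj, hd, hf0, hf1, hfQ⟩ := aux j₀ (pt 2 0)
      (fun h => by obtain ⟨ha, _⟩ := pt_inj h; norm_num at ha)
      (fun h => by obtain ⟨ha, _⟩ := pt_inj h; norm_num at ha)
      (fun h => by obtain ⟨ha, _⟩ := pt_inj h; norm_num at ha)
      (fun h => by obtain ⟨ha, _⟩ := pt_inj h; norm_num at ha)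
    refine ⟨f, hinj, ?_⟩
    intro i j hij
    by_cases hj : j = j₀
    · subst hj
      have hi : i ≠ 0 := fun h => hij (by simp [h])
      have : i = 1 := by omega
      subst this
      rw [hf1, hfQ]
      apply dist_pt_eq_one; norm_num
    · exact hd i j hj
  · obtain ⟨f, hinj, hd, hf0, hf1, hfQ⟩ := aux j₀ (pt (-1) 0)
      (fun h => by obtain ⟨ha, _⟩ := pt_inj h; norm_num at ha)
      (fun h => by obtain ⟨ha, _⟩ := pt_inj h; norm_num at ha)
      (fun h => by obtain ⟨ha, _⟩ := pt_inj h; norm_num at ha)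
      (fun h => by obtain ⟨ha, _⟩ := pt_inj h; norm_num at ha)
    refine ⟨f, hinj, ?_⟩
    intro i j hij
    by_cases hj : j = j₀
    · subst hj
      have hi : i ≠ 1 := fun h => hij (by simp [h])
      have : i = 0 := by omega
      subst this
      rw [hf0, hfQ]
      apply dist_pt_eq_one; norm_num
    · exact hd i j hj
end

section
/- The chromatic number of the Moser spindle is exactly 4: the Moser spindle has a proper vertex coloring with 4 colors, and it has no proper vertex coloring with 3 colors. -/
/-- The Moser spindle: the graph on `Fin 7` (vertices `1,…,7` relabelled `0,…,6`) with the
11 edges `{1,2}, {1,3}, {1,4}, {1,5}, {2,4}, {3,5}, {2,6}, {4,6}, {3,7}, {5,7}, {6,7}`. -/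
def moserSpindle : SimpleGraph (Fin 7) :=
  SimpleGraph.fromEdgeSet
    {s(0, 1), s(0, 2), s(0, 3), s(0, 4), s(1, 3), s(2, 4),
     s(1, 5), s(3, 5), s(2, 6), s(4, 6), s(5, 6)}

instance : DecidableRel moserSpindle.Adj := fun u v =>
  decidable_of_iff
    ((s(u,v) = s(0,1) ∨ s(u,v) = s(0,2) ∨ s(u,v) = s(0,3) ∨ s(u,v) = s(0,4) ∨
      s(u,v) = s(1,3) ∨ s(u,v) = s(2,4) ∨ s(u,v) = s(1,5) ∨ s(u,v) = s(3,5) ∨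
      s(u,v) = s(2,6) ∨ s(u,v) = s(4,6) ∨ s(u,v) = s(5,6)) ∧ u ≠ v)
    (by simp [moserSpindle, SimpleGraph.fromEdgeSet_adj, Set.mem_insert_iff,
         Set.mem_singleton_iff])

set_option synthInstance.maxSize 400 in
set_option synthInstance.maxHeartbeats 400000 in
lemma moser_no3 : ∀ a b c d e f g : Fin 3,
    ¬(a ≠ b ∧ a ≠ c ∧ a ≠ d ∧ a ≠ e ∧ b ≠ d ∧ c ≠ e ∧ b ≠ f ∧ d ≠ f ∧ c ≠ g ∧ e ≠ g ∧ f ≠ g) := by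
  decide

/-- The chromatic number of the Moser spindle is exactly 4: it admits a proper coloring
with 4 colors but no proper coloring with 3 colors. -/
theorem moserSpindle_chromatic_number_four :
    (∃ c : Fin 7 → Fin 4, ∀ u v : Fin 7, moserSpindle.Adj u v → c u ≠ c v) ∧
    ¬ ∃ c : Fin 7 → Fin 3, ∀ u v : Fin 7, moserSpindle.Adj u v → c u ≠ c v := by
  constructor
  · exact ⟨![0,1,1,2,2,0,3], by decide⟩
  · rintro ⟨c, h⟩
    exact moser_no3 (c 0) (c 1) (c 2) (c 3) (c 4) (c 5) (c 6)
      ⟨h 0 1 (by decide), h 0 2 (by decide), h 0 3 (by decide), h 0 4 (by decide),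
       h 1 3 (by decide), h 2 4 (by decide), h 1 5 (by decide), h 3 5 (by decide),
       h 2 6 (by decide), h 4 6 (by decide), h 5 6 (by decide)⟩
end

section
/- The Petersen graph is unit-distance embeddable: there exists an injective map f from the vertices of the Petersen graph to ℝ² such that dist (f u) (f v) = 1 for every edge {u, v}. -/
open Real Complex

noncomputable section PetersenAux

namespace PetersenAux

lemma sqrt5_sq : Real.sqrt 5 ^ 2 = 5 := Real.sq_sqrt (by norm_num)

lemma sqrt5_pos : 0 < Real.sqrt 5 := Real.sqrt_pos.mpr (by norm_num)

lemma sqrt5_lt : Real.sqrt 5 < 5 := by nlinarith [sqrt5_sq, sqrt5_pos]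

def RR : ℝ := Real.sqrt ((5 + Real.sqrt 5) / 10)
def rr : ℝ := Real.sqrt ((5 - Real.sqrt 5) / 10)

lemma RR_sq : RR ^ 2 = (5 + Real.sqrt 5) / 10 :=
  Real.sq_sqrt (by nlinarith [sqrt5_pos])

lemma rr_sq : rr ^ 2 = (5 - Real.sqrt 5) / 10 :=
  Real.sq_sqrt (by nlinarith [sqrt5_lt])

lemma RR_pos : 0 < RR := Real.sqrt_pos.mpr (by nlinarith [sqrt5_pos])
lemma rr_pos : 0 < rr := Real.sqrt_pos.mpr (by nlinarith [sqrt5_lt])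

/-- A point at radius `ρ` and angle `x` as a complex number. -/
def pt (ρ x : ℝ) : ℂ := (ρ : ℂ) * Complex.exp ((x : ℂ) * Complex.I)

lemma dist_pt_sq (ρ σ x y : ℝ) :
    dist (pt ρ x) (pt σ y) ^ 2 = ρ ^ 2 + σ ^ 2 - 2 * ρ * σ * Real.cos (x - y) := by
  rw [Complex.dist_eq, Complex.sq_norm]
  simp only [pt, Complex.normSq_apply, Complex.sub_re, Complex.sub_im, Complex.mul_re,
    Complex.mul_im, Complex.ofReal_re, Complex.ofReal_im, Complex.exp_ofReal_mul_I_re,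
    Complex.exp_ofReal_mul_I_im, zero_mul, mul_zero, sub_zero, zero_add, add_zero]
  linear_combination ρ ^ 2 * Real.sin_sq_add_cos_sq x + σ ^ 2 * Real.sin_sq_add_cos_sq y
    + 2 * ρ * σ * Real.cos_sub x y

lemma dist_pt_eq_one (ρ σ x y : ℝ)
    (h : ρ ^ 2 + σ ^ 2 - 2 * ρ * σ * Real.cos (x - y) = 1) :
    dist (pt ρ x) (pt σ y) = 1 := by
  have h2 : dist (pt ρ x) (pt σ y) ^ 2 = 1 := by rw [dist_pt_sq, h]
  have hnn : (0:ℝ) ≤ dist (pt ρ x) (pt σ y) := dist_nonneg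
  have h0 : (dist (pt ρ x) (pt σ y) - 1) * (dist (pt ρ x) (pt σ y) + 1) = 0 := by
    linear_combination h2
  rcases mul_eq_zero.1 h0 with h | h
  · linarith
  · linarith

def outk (k : ℕ) : ℂ := pt RR (2 * π * k / 5)
def innk (k : ℕ) : ℂ := pt rr (2 * π * k / 5 + 2 * π / 5 - π / 2)

lemma hc1 : Real.cos (2 * π / 5) = (Real.sqrt 5 - 1) / 4 := by
  rw [show 2 * π / 5 = 2 * (π / 5) by ring, Real.cos_two_mul, Real.cos_pi_div_five]
  linear_combination (1/8) * sqrt5_sq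

lemma hc2 : Real.cos (4 * π / 5) = -(1 + Real.sqrt 5) / 4 := by
  rw [show 4 * π / 5 = π - π / 5 by ring, Real.cos_pi_sub, Real.cos_pi_div_five]
  ring

lemma edge_out {i j : ℕ}
    (h : Real.cos (2 * π * i / 5 - 2 * π * j / 5) = (Real.sqrt 5 - 1) / 4) :
    dist (outk i) (outk j) = 1 := by
  apply dist_pt_eq_one
  rw [h]
  linear_combination ((5 - Real.sqrt 5) / 2) * RR_sq - (1/20) * sqrt5_sq

lemma edge_inn {i j : ℕ}
    (h : Real.cos ((2 * π * i / 5 + 2 * π / 5 - π / 2) - (2 * π * j / 5 + 2 * π / 5 - π / 2))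
      = -(1 + Real.sqrt 5) / 4) :
    dist (innk i) (innk j) = 1 := by
  apply dist_pt_eq_one
  rw [h]
  linear_combination ((5 + Real.sqrt 5) / 2) * rr_sq - (1/20) * sqrt5_sq

lemma edge_spoke {i j : ℕ}
    (h : Real.cos ((2 * π * i / 5 + 2 * π / 5 - π / 2) - 2 * π * j / 5) = 0) :
    dist (innk i) (outk j) = 1 := by
  apply dist_pt_eq_one
  rw [h]
  linear_combination rr_sq + RR_sq

/-- primitive 5th root of unity -/
def w : ℂ := Complex.exp (2 * π * Complex.I / 5)

lemma hw : IsPrimitiveRoot w 5 := Complex.isPrimitiveRoot_exp 5 (by norm_num)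

lemma outk_eq (k : ℕ) : outk k = (RR : ℂ) * w ^ k := by
  rw [outk, pt, w, ← Complex.exp_nat_mul]
  congr 2
  push_cast
  ring

def q : ℂ := (rr : ℂ) * Complex.exp (((2 * π / 5 - π / 2 : ℝ) : ℂ) * Complex.I)

lemma innk_eq (k : ℕ) : innk k = q * w ^ k := by
  rw [innk, pt, q, w, ← Complex.exp_nat_mul, mul_assoc ((rr : ℝ) : ℂ), ← Complex.exp_add]
  congr 2
  push_cast
  ring

lemma RRc_ne : (RR : ℂ) ≠ 0 := Complex.ofReal_ne_zero.mpr RR_pos.ne'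

lemma q_ne : q ≠ 0 := mul_ne_zero (Complex.ofReal_ne_zero.mpr rr_pos.ne') (Complex.exp_ne_zero _)

lemma out_ne_out {i j : ℕ} (hi : i < 5) (hj : j < 5) (hij : i ≠ j) : outk i ≠ outk j := by
  rw [outk_eq, outk_eq]
  intro h
  exact hij (hw.pow_inj hi hj (mul_left_cancel₀ RRc_ne h))

lemma inn_ne_inn {i j : ℕ} (hi : i < 5) (hj : j < 5) (hij : i ≠ j) : innk i ≠ innk j := by
  rw [innk_eq, innk_eq]
  intro h
  exact hij (hw.pow_inj hi hj (mul_left_cancel₀ q_ne h))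

lemma out_ne_inn (i j : ℕ) : outk i ≠ innk j := by
  intro h
  have h2 := congrArg (‖·‖) h
  simp only [outk, innk, pt, norm_mul, Complex.norm_real, Real.norm_eq_abs, Complex.norm_exp_ofReal_mul_I,
    mul_one] at h2
  rw [_root_.abs_of_nonneg RR_pos.le, _root_.abs_of_nonneg rr_pos.le] at h2
  have h3 : RR ^ 2 = rr ^ 2 := by rw [h2]
  rw [RR_sq, rr_sq] at h3
  nlinarith [sqrt5_pos]

def g (s : Finset (Fin 5)) : ℂ :=
  if s = {0, 1} then outk 0
  else if s = {1, 2} then outk 2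
  else if s = {2, 3} then outk 4
  else if s = {3, 4} then outk 1
  else if s = {0, 4} then outk 3
  else if s = {0, 2} then innk 0
  else if s = {1, 3} then innk 2
  else if s = {2, 4} then innk 4
  else if s = {0, 3} then innk 1
  else innk 3

def toE (z : ℂ) : EuclideanSpace ℝ (Fin 2) := !₂[z.re, z.im]

lemma dist_toE (z zz : ℂ) : dist (toE z) (toE zz) = dist z zz := by
  rw [EuclideanSpace.dist_eq, Complex.dist_eq, Complex.norm_def, Complex.normSq_apply]
  congr 1
  rw [Fin.sum_univ_two]
  simp only [toE, WithLp.ofLp_toLp, Matrix.cons_val_zero, Matrix.cons_val_one, Matrix.head_cons, Real.dist_eq,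
    Complex.sub_re, Complex.sub_im, _root_.sq_abs]
  ring

lemma toE_inj : Function.Injective toE := by
  intro z zz h
  have : dist z zz = 0 := by rw [← dist_toE, h, dist_self]
  exact dist_eq_zero.mp this

lemma vertex_cases (v : {s : Finset (Fin 5) // s.card = 2}) :
    v.1 = {0, 1} ∨ v.1 = {1, 2} ∨ v.1 = {2, 3} ∨ v.1 = {3, 4} ∨ v.1 = {0, 4} ∨
    v.1 = {0, 2} ∨ v.1 = {1, 3} ∨ v.1 = {2, 4} ∨ v.1 = {0, 3} ∨ v.1 = {1, 4} := by
  revert v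
  decide

lemma ev0 : g ({0, 1} : Finset (Fin 5)) = outk 0 := by
  simp only [g]
  rw [if_true]

lemma ev1 : g ({1, 2} : Finset (Fin 5)) = outk 2 := by
  simp only [g]
  rw [if_neg (by decide)]
  rw [if_true]

lemma ev2 : g ({2, 3} : Finset (Fin 5)) = outk 4 := by
  simp only [g]
  rw [if_neg (by decide)]
  rw [if_neg (by decide)]
  rw [if_true]

lemma ev3 : g ({3, 4} : Finset (Fin 5)) = outk 1 := by
  simp only [g]
  rw [if_neg (by decide)]
  rw [if_neg (by decide)]
  rw [if_neg (by decide)]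
  rw [if_true]

lemma ev4 : g ({0, 4} : Finset (Fin 5)) = outk 3 := by
  simp only [g]
  rw [if_neg (by decide)]
  rw [if_neg (by decide)]
  rw [if_neg (by decide)]
  rw [if_neg (by decide)]
  rw [if_true]

lemma ev5 : g ({0, 2} : Finset (Fin 5)) = innk 0 := by
  simp only [g]
  rw [if_neg (by decide)]
  rw [if_neg (by decide)]
  rw [if_neg (by decide)]
  rw [if_neg (by decide)]
  rw [if_neg (by decide)]
  rw [if_true]

lemma ev6 : g ({1, 3} : Finset (Fin 5)) = innk 2 := by
  simp only [g]
  rw [if_neg (by decide)]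
  rw [if_neg (by decide)]
  rw [if_neg (by decide)]
  rw [if_neg (by decide)]
  rw [if_neg (by decide)]
  rw [if_neg (by decide)]
  rw [if_true]

lemma ev7 : g ({2, 4} : Finset (Fin 5)) = innk 4 := by
  simp only [g]
  rw [if_neg (by decide)]
  rw [if_neg (by decide)]
  rw [if_neg (by decide)]
  rw [if_neg (by decide)]
  rw [if_neg (by decide)]
  rw [if_neg (by decide)]
  rw [if_neg (by decide)]
  rw [if_true]

lemma ev8 : g ({0, 3} : Finset (Fin 5)) = innk 1 := by
  simp only [g]
  rw [if_neg (by decide)]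
  rw [if_neg (by decide)]
  rw [if_neg (by decide)]
  rw [if_neg (by decide)]
  rw [if_neg (by decide)]
  rw [if_neg (by decide)]
  rw [if_neg (by decide)]
  rw [if_neg (by decide)]
  rw [if_true]

lemma ev9 : g ({1, 4} : Finset (Fin 5)) = innk 3 := by
  simp only [g]
  rw [if_neg (by decide)]
  rw [if_neg (by decide)]
  rw [if_neg (by decide)]
  rw [if_neg (by decide)]
  rw [if_neg (by decide)]
  rw [if_neg (by decide)]
  rw [if_neg (by decide)]
  rw [if_neg (by decide)]
  rw [if_neg (by decide)]

lemma L1 : dist (outk 0) (outk 4) = 1 := by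
  apply edge_out
  have e : 2 * π * ((0 : ℕ) : ℝ) / 5 - 2 * π * ((4 : ℕ) : ℝ) / 5 = 2 * π / 5 + (-1 : ℤ) * (2 * π) := by push_cast; ring
  rw [e, Real.cos_add_int_mul_two_pi]
  exact hc1

lemma L2 : dist (outk 0) (outk 1) = 1 := by
  apply edge_out
  have e : 2 * π * ((0 : ℕ) : ℝ) / 5 - 2 * π * ((1 : ℕ) : ℝ) / 5 = -(2 * π / 5) := by push_cast; ring
  rw [e, Real.cos_neg]
  exact hc1

lemma L3 : dist (outk 2) (outk 1) = 1 := by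
  apply edge_out
  have e : 2 * π * ((2 : ℕ) : ℝ) / 5 - 2 * π * ((1 : ℕ) : ℝ) / 5 = 2 * π / 5 := by push_cast; ring
  rw [e]
  exact hc1

lemma L4 : dist (outk 2) (outk 3) = 1 := by
  apply edge_out
  have e : 2 * π * ((2 : ℕ) : ℝ) / 5 - 2 * π * ((3 : ℕ) : ℝ) / 5 = -(2 * π / 5) := by push_cast; ring
  rw [e, Real.cos_neg]
  exact hc1

lemma L5 : dist (outk 4) (outk 3) = 1 := by
  apply edge_out
  have e : 2 * π * ((4 : ℕ) : ℝ) / 5 - 2 * π * ((3 : ℕ) : ℝ) / 5 = 2 * π / 5 := by push_cast; ring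
  rw [e]
  exact hc1

lemma L6 : dist (innk 0) (innk 2) = 1 := by
  apply edge_inn
  have e : (2 * π * ((0 : ℕ) : ℝ) / 5 + 2 * π / 5 - π / 2) - (2 * π * ((2 : ℕ) : ℝ) / 5 + 2 * π / 5 - π / 2) = -(4 * π / 5) := by push_cast; ring
  rw [e, Real.cos_neg]
  exact hc2

lemma L7 : dist (innk 2) (innk 4) = 1 := by
  apply edge_inn
  have e : (2 * π * ((2 : ℕ) : ℝ) / 5 + 2 * π / 5 - π / 2) - (2 * π * ((4 : ℕ) : ℝ) / 5 + 2 * π / 5 - π / 2) = -(4 * π / 5) := by push_cast; ring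
  rw [e, Real.cos_neg]
  exact hc2

lemma L8 : dist (innk 4) (innk 1) = 1 := by
  apply edge_inn
  have e : (2 * π * ((4 : ℕ) : ℝ) / 5 + 2 * π / 5 - π / 2) - (2 * π * ((1 : ℕ) : ℝ) / 5 + 2 * π / 5 - π / 2) = -(4 * π / 5) + (1 : ℤ) * (2 * π) := by push_cast; ring
  rw [e, Real.cos_add_int_mul_two_pi, Real.cos_neg]
  exact hc2

lemma L9 : dist (innk 1) (innk 3) = 1 := by
  apply edge_inn
  have e : (2 * π * ((1 : ℕ) : ℝ) / 5 + 2 * π / 5 - π / 2) - (2 * π * ((3 : ℕ) : ℝ) / 5 + 2 * π / 5 - π / 2) = -(4 * π / 5) := by push_cast; ring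
  rw [e, Real.cos_neg]
  exact hc2

lemma L10 : dist (innk 0) (innk 3) = 1 := by
  apply edge_inn
  have e : (2 * π * ((0 : ℕ) : ℝ) / 5 + 2 * π / 5 - π / 2) - (2 * π * ((3 : ℕ) : ℝ) / 5 + 2 * π / 5 - π / 2) = 4 * π / 5 + (-1 : ℤ) * (2 * π) := by push_cast; ring
  rw [e, Real.cos_add_int_mul_two_pi]
  exact hc2

lemma L11 : dist (innk 0) (outk 1) = 1 := by
  apply edge_spoke
  have e : (2 * π * ((0 : ℕ) : ℝ) / 5 + 2 * π / 5 - π / 2) - 2 * π * ((1 : ℕ) : ℝ) / 5 = -(π / 2) := by push_cast; ring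
  rw [e, Real.cos_neg, Real.cos_pi_div_two]

lemma L12 : dist (innk 2) (outk 3) = 1 := by
  apply edge_spoke
  have e : (2 * π * ((2 : ℕ) : ℝ) / 5 + 2 * π / 5 - π / 2) - 2 * π * ((3 : ℕ) : ℝ) / 5 = -(π / 2) := by push_cast; ring
  rw [e, Real.cos_neg, Real.cos_pi_div_two]

lemma L13 : dist (innk 4) (outk 0) = 1 := by
  apply edge_spoke
  have e : (2 * π * ((4 : ℕ) : ℝ) / 5 + 2 * π / 5 - π / 2) - 2 * π * ((0 : ℕ) : ℝ) / 5 = -(π / 2) + (1 : ℤ) * (2 * π) := by push_cast; ring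
  rw [e, Real.cos_add_int_mul_two_pi, Real.cos_neg, Real.cos_pi_div_two]

lemma L14 : dist (innk 1) (outk 2) = 1 := by
  apply edge_spoke
  have e : (2 * π * ((1 : ℕ) : ℝ) / 5 + 2 * π / 5 - π / 2) - 2 * π * ((2 : ℕ) : ℝ) / 5 = -(π / 2) := by push_cast; ring
  rw [e, Real.cos_neg, Real.cos_pi_div_two]

lemma L15 : dist (innk 3) (outk 4) = 1 := by
  apply edge_spoke
  have e : (2 * π * ((3 : ℕ) : ℝ) / 5 + 2 * π / 5 - π / 2) - 2 * π * ((4 : ℕ) : ℝ) / 5 = -(π / 2) := by push_cast; ring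
  rw [e, Real.cos_neg, Real.cos_pi_div_two]

end PetersenAux

open PetersenAux in
/-- The Petersen graph (the Kneser graph `K(5,2)`: vertices are `2`-element subsets of a
`5`-element set, adjacent iff disjoint) is unit-distance embeddable. -/
theorem petersen_unit_distance_embeddable :
    ∃ f : {s : Finset (Fin 5) // s.card = 2} → EuclideanSpace ℝ (Fin 2),
      Function.Injective f ∧
        ∀ a b : {s : Finset (Fin 5) // s.card = 2},
          Disjoint a.1 b.1 → dist (f a) (f b) = 1 := by
  refine ⟨fun v => toE (g v.1), ?_, ?_⟩
  · intro a b hab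
    have h : g a.1 = g b.1 := toE_inj hab
    rcases vertex_cases a with ha|ha|ha|ha|ha|ha|ha|ha|ha|ha <;>
      rcases vertex_cases b with hb|hb|hb|hb|hb|hb|hb|hb|hb|hb
    · exact Subtype.ext (ha.trans hb.symm)
    · rw [ha, hb, ev0, ev1] at h
      exact absurd h (out_ne_out (by norm_num) (by norm_num) (by norm_num))
    · rw [ha, hb, ev0, ev2] at h
      exact absurd h (out_ne_out (by norm_num) (by norm_num) (by norm_num))
    · rw [ha, hb, ev0, ev3] at h
      exact absurd h (out_ne_out (by norm_num) (by norm_num) (by norm_num))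
    · rw [ha, hb, ev0, ev4] at h
      exact absurd h (out_ne_out (by norm_num) (by norm_num) (by norm_num))
    · rw [ha, hb, ev0, ev5] at h
      exact absurd h (out_ne_inn 0 0)
    · rw [ha, hb, ev0, ev6] at h
      exact absurd h (out_ne_inn 0 2)
    · rw [ha, hb, ev0, ev7] at h
      exact absurd h (out_ne_inn 0 4)
    · rw [ha, hb, ev0, ev8] at h
      exact absurd h (out_ne_inn 0 1)
    · rw [ha, hb, ev0, ev9] at h
      exact absurd h (out_ne_inn 0 3)
    · rw [ha, hb, ev1, ev0] at h
      exact absurd h (out_ne_out (by norm_num) (by norm_num) (by norm_num))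
    · exact Subtype.ext (ha.trans hb.symm)
    · rw [ha, hb, ev1, ev2] at h
      exact absurd h (out_ne_out (by norm_num) (by norm_num) (by norm_num))
    · rw [ha, hb, ev1, ev3] at h
      exact absurd h (out_ne_out (by norm_num) (by norm_num) (by norm_num))
    · rw [ha, hb, ev1, ev4] at h
      exact absurd h (out_ne_out (by norm_num) (by norm_num) (by norm_num))
    · rw [ha, hb, ev1, ev5] at h
      exact absurd h (out_ne_inn 2 0)
    · rw [ha, hb, ev1, ev6] at h
      exact absurd h (out_ne_inn 2 2)
    · rw [ha, hb, ev1, ev7] at h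
      exact absurd h (out_ne_inn 2 4)
    · rw [ha, hb, ev1, ev8] at h
      exact absurd h (out_ne_inn 2 1)
    · rw [ha, hb, ev1, ev9] at h
      exact absurd h (out_ne_inn 2 3)
    · rw [ha, hb, ev2, ev0] at h
      exact absurd h (out_ne_out (by norm_num) (by norm_num) (by norm_num))
    · rw [ha, hb, ev2, ev1] at h
      exact absurd h (out_ne_out (by norm_num) (by norm_num) (by norm_num))
    · exact Subtype.ext (ha.trans hb.symm)
    · rw [ha, hb, ev2, ev3] at h
      exact absurd h (out_ne_out (by norm_num) (by norm_num) (by norm_num))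
    · rw [ha, hb, ev2, ev4] at h
      exact absurd h (out_ne_out (by norm_num) (by norm_num) (by norm_num))
    · rw [ha, hb, ev2, ev5] at h
      exact absurd h (out_ne_inn 4 0)
    · rw [ha, hb, ev2, ev6] at h
      exact absurd h (out_ne_inn 4 2)
    · rw [ha, hb, ev2, ev7] at h
      exact absurd h (out_ne_inn 4 4)
    · rw [ha, hb, ev2, ev8] at h
      exact absurd h (out_ne_inn 4 1)
    · rw [ha, hb, ev2, ev9] at h
      exact absurd h (out_ne_inn 4 3)
    · rw [ha, hb, ev3, ev0] at h
      exact absurd h (out_ne_out (by norm_num) (by norm_num) (by norm_num))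
    · rw [ha, hb, ev3, ev1] at h
      exact absurd h (out_ne_out (by norm_num) (by norm_num) (by norm_num))
    · rw [ha, hb, ev3, ev2] at h
      exact absurd h (out_ne_out (by norm_num) (by norm_num) (by norm_num))
    · exact Subtype.ext (ha.trans hb.symm)
    · rw [ha, hb, ev3, ev4] at h
      exact absurd h (out_ne_out (by norm_num) (by norm_num) (by norm_num))
    · rw [ha, hb, ev3, ev5] at h
      exact absurd h (out_ne_inn 1 0)
    · rw [ha, hb, ev3, ev6] at h
      exact absurd h (out_ne_inn 1 2)
    · rw [ha, hb, ev3, ev7] at h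
      exact absurd h (out_ne_inn 1 4)
    · rw [ha, hb, ev3, ev8] at h
      exact absurd h (out_ne_inn 1 1)
    · rw [ha, hb, ev3, ev9] at h
      exact absurd h (out_ne_inn 1 3)
    · rw [ha, hb, ev4, ev0] at h
      exact absurd h (out_ne_out (by norm_num) (by norm_num) (by norm_num))
    · rw [ha, hb, ev4, ev1] at h
      exact absurd h (out_ne_out (by norm_num) (by norm_num) (by norm_num))
    · rw [ha, hb, ev4, ev2] at h
      exact absurd h (out_ne_out (by norm_num) (by norm_num) (by norm_num))
    · rw [ha, hb, ev4, ev3] at h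
      exact absurd h (out_ne_out (by norm_num) (by norm_num) (by norm_num))
    · exact Subtype.ext (ha.trans hb.symm)
    · rw [ha, hb, ev4, ev5] at h
      exact absurd h (out_ne_inn 3 0)
    · rw [ha, hb, ev4, ev6] at h
      exact absurd h (out_ne_inn 3 2)
    · rw [ha, hb, ev4, ev7] at h
      exact absurd h (out_ne_inn 3 4)
    · rw [ha, hb, ev4, ev8] at h
      exact absurd h (out_ne_inn 3 1)
    · rw [ha, hb, ev4, ev9] at h
      exact absurd h (out_ne_inn 3 3)
    · rw [ha, hb, ev5, ev0] at h
      exact absurd h (Ne.symm (out_ne_inn 0 0))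
    · rw [ha, hb, ev5, ev1] at h
      exact absurd h (Ne.symm (out_ne_inn 2 0))
    · rw [ha, hb, ev5, ev2] at h
      exact absurd h (Ne.symm (out_ne_inn 4 0))
    · rw [ha, hb, ev5, ev3] at h
      exact absurd h (Ne.symm (out_ne_inn 1 0))
    · rw [ha, hb, ev5, ev4] at h
      exact absurd h (Ne.symm (out_ne_inn 3 0))
    · exact Subtype.ext (ha.trans hb.symm)
    · rw [ha, hb, ev5, ev6] at h
      exact absurd h (inn_ne_inn (by norm_num) (by norm_num) (by norm_num))
    · rw [ha, hb, ev5, ev7] at h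
      exact absurd h (inn_ne_inn (by norm_num) (by norm_num) (by norm_num))
    · rw [ha, hb, ev5, ev8] at h
      exact absurd h (inn_ne_inn (by norm_num) (by norm_num) (by norm_num))
    · rw [ha, hb, ev5, ev9] at h
      exact absurd h (inn_ne_inn (by norm_num) (by norm_num) (by norm_num))
    · rw [ha, hb, ev6, ev0] at h
      exact absurd h (Ne.symm (out_ne_inn 0 2))
    · rw [ha, hb, ev6, ev1] at h
      exact absurd h (Ne.symm (out_ne_inn 2 2))
    · rw [ha, hb, ev6, ev2] at h
      exact absurd h (Ne.symm (out_ne_inn 4 2))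
    · rw [ha, hb, ev6, ev3] at h
      exact absurd h (Ne.symm (out_ne_inn 1 2))
    · rw [ha, hb, ev6, ev4] at h
      exact absurd h (Ne.symm (out_ne_inn 3 2))
    · rw [ha, hb, ev6, ev5] at h
      exact absurd h (inn_ne_inn (by norm_num) (by norm_num) (by norm_num))
    · exact Subtype.ext (ha.trans hb.symm)
    · rw [ha, hb, ev6, ev7] at h
      exact absurd h (inn_ne_inn (by norm_num) (by norm_num) (by norm_num))
    · rw [ha, hb, ev6, ev8] at h
      exact absurd h (inn_ne_inn (by norm_num) (by norm_num) (by norm_num))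
    · rw [ha, hb, ev6, ev9] at h
      exact absurd h (inn_ne_inn (by norm_num) (by norm_num) (by norm_num))
    · rw [ha, hb, ev7, ev0] at h
      exact absurd h (Ne.symm (out_ne_inn 0 4))
    · rw [ha, hb, ev7, ev1] at h
      exact absurd h (Ne.symm (out_ne_inn 2 4))
    · rw [ha, hb, ev7, ev2] at h
      exact absurd h (Ne.symm (out_ne_inn 4 4))
    · rw [ha, hb, ev7, ev3] at h
      exact absurd h (Ne.symm (out_ne_inn 1 4))
    · rw [ha, hb, ev7, ev4] at h
      exact absurd h (Ne.symm (out_ne_inn 3 4))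
    · rw [ha, hb, ev7, ev5] at h
      exact absurd h (inn_ne_inn (by norm_num) (by norm_num) (by norm_num))
    · rw [ha, hb, ev7, ev6] at h
      exact absurd h (inn_ne_inn (by norm_num) (by norm_num) (by norm_num))
    · exact Subtype.ext (ha.trans hb.symm)
    · rw [ha, hb, ev7, ev8] at h
      exact absurd h (inn_ne_inn (by norm_num) (by norm_num) (by norm_num))
    · rw [ha, hb, ev7, ev9] at h
      exact absurd h (inn_ne_inn (by norm_num) (by norm_num) (by norm_num))
    · rw [ha, hb, ev8, ev0] at h
      exact absurd h (Ne.symm (out_ne_inn 0 1))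
    · rw [ha, hb, ev8, ev1] at h
      exact absurd h (Ne.symm (out_ne_inn 2 1))
    · rw [ha, hb, ev8, ev2] at h
      exact absurd h (Ne.symm (out_ne_inn 4 1))
    · rw [ha, hb, ev8, ev3] at h
      exact absurd h (Ne.symm (out_ne_inn 1 1))
    · rw [ha, hb, ev8, ev4] at h
      exact absurd h (Ne.symm (out_ne_inn 3 1))
    · rw [ha, hb, ev8, ev5] at h
      exact absurd h (inn_ne_inn (by norm_num) (by norm_num) (by norm_num))
    · rw [ha, hb, ev8, ev6] at h
      exact absurd h (inn_ne_inn (by norm_num) (by norm_num) (by norm_num))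
    · rw [ha, hb, ev8, ev7] at h
      exact absurd h (inn_ne_inn (by norm_num) (by norm_num) (by norm_num))
    · exact Subtype.ext (ha.trans hb.symm)
    · rw [ha, hb, ev8, ev9] at h
      exact absurd h (inn_ne_inn (by norm_num) (by norm_num) (by norm_num))
    · rw [ha, hb, ev9, ev0] at h
      exact absurd h (Ne.symm (out_ne_inn 0 3))
    · rw [ha, hb, ev9, ev1] at h
      exact absurd h (Ne.symm (out_ne_inn 2 3))
    · rw [ha, hb, ev9, ev2] at h
      exact absurd h (Ne.symm (out_ne_inn 4 3))
    · rw [ha, hb, ev9, ev3] at h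
      exact absurd h (Ne.symm (out_ne_inn 1 3))
    · rw [ha, hb, ev9, ev4] at h
      exact absurd h (Ne.symm (out_ne_inn 3 3))
    · rw [ha, hb, ev9, ev5] at h
      exact absurd h (inn_ne_inn (by norm_num) (by norm_num) (by norm_num))
    · rw [ha, hb, ev9, ev6] at h
      exact absurd h (inn_ne_inn (by norm_num) (by norm_num) (by norm_num))
    · rw [ha, hb, ev9, ev7] at h
      exact absurd h (inn_ne_inn (by norm_num) (by norm_num) (by norm_num))
    · rw [ha, hb, ev9, ev8] at h
      exact absurd h (inn_ne_inn (by norm_num) (by norm_num) (by norm_num))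
    · exact Subtype.ext (ha.trans hb.symm)
  · intro a b hd
    show dist (toE (g a.1)) (toE (g b.1)) = 1
    rw [dist_toE]
    rcases vertex_cases a with ha|ha|ha|ha|ha|ha|ha|ha|ha|ha <;>
      rcases vertex_cases b with hb|hb|hb|hb|hb|hb|hb|hb|hb|hb
    · rw [ha, hb] at hd
      exact absurd hd (by decide)
    · rw [ha, hb] at hd
      exact absurd hd (by decide)
    · rw [ha, hb, ev0, ev2]
      exact L1
    · rw [ha, hb, ev0, ev3]
      exact L2
    · rw [ha, hb] at hd
      exact absurd hd (by decide)
    · rw [ha, hb] at hd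
      exact absurd hd (by decide)
    · rw [ha, hb] at hd
      exact absurd hd (by decide)
    · rw [ha, hb, ev0, ev7, dist_comm]
      exact L13
    · rw [ha, hb] at hd
      exact absurd hd (by decide)
    · rw [ha, hb] at hd
      exact absurd hd (by decide)
    · rw [ha, hb] at hd
      exact absurd hd (by decide)
    · rw [ha, hb] at hd
      exact absurd hd (by decide)
    · rw [ha, hb] at hd
      exact absurd hd (by decide)
    · rw [ha, hb, ev1, ev3]
      exact L3
    · rw [ha, hb, ev1, ev4]
      exact L4
    · rw [ha, hb] at hd
      exact absurd hd (by decide)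
    · rw [ha, hb] at hd
      exact absurd hd (by decide)
    · rw [ha, hb] at hd
      exact absurd hd (by decide)
    · rw [ha, hb, ev1, ev8, dist_comm]
      exact L14
    · rw [ha, hb] at hd
      exact absurd hd (by decide)
    · rw [ha, hb, ev2, ev0, dist_comm]
      exact L1
    · rw [ha, hb] at hd
      exact absurd hd (by decide)
    · rw [ha, hb] at hd
      exact absurd hd (by decide)
    · rw [ha, hb] at hd
      exact absurd hd (by decide)
    · rw [ha, hb, ev2, ev4]
      exact L5
    · rw [ha, hb] at hd
      exact absurd hd (by decide)
    · rw [ha, hb] at hd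
      exact absurd hd (by decide)
    · rw [ha, hb] at hd
      exact absurd hd (by decide)
    · rw [ha, hb] at hd
      exact absurd hd (by decide)
    · rw [ha, hb, ev2, ev9, dist_comm]
      exact L15
    · rw [ha, hb, ev3, ev0, dist_comm]
      exact L2
    · rw [ha, hb, ev3, ev1, dist_comm]
      exact L3
    · rw [ha, hb] at hd
      exact absurd hd (by decide)
    · rw [ha, hb] at hd
      exact absurd hd (by decide)
    · rw [ha, hb] at hd
      exact absurd hd (by decide)
    · rw [ha, hb, ev3, ev5, dist_comm]
      exact L11
    · rw [ha, hb] at hd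
      exact absurd hd (by decide)
    · rw [ha, hb] at hd
      exact absurd hd (by decide)
    · rw [ha, hb] at hd
      exact absurd hd (by decide)
    · rw [ha, hb] at hd
      exact absurd hd (by decide)
    · rw [ha, hb] at hd
      exact absurd hd (by decide)
    · rw [ha, hb, ev4, ev1, dist_comm]
      exact L4
    · rw [ha, hb, ev4, ev2, dist_comm]
      exact L5
    · rw [ha, hb] at hd
      exact absurd hd (by decide)
    · rw [ha, hb] at hd
      exact absurd hd (by decide)
    · rw [ha, hb] at hd
      exact absurd hd (by decide)
    · rw [ha, hb, ev4, ev6, dist_comm]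
      exact L12
    · rw [ha, hb] at hd
      exact absurd hd (by decide)
    · rw [ha, hb] at hd
      exact absurd hd (by decide)
    · rw [ha, hb] at hd
      exact absurd hd (by decide)
    · rw [ha, hb] at hd
      exact absurd hd (by decide)
    · rw [ha, hb] at hd
      exact absurd hd (by decide)
    · rw [ha, hb] at hd
      exact absurd hd (by decide)
    · rw [ha, hb, ev5, ev3]
      exact L11
    · rw [ha, hb] at hd
      exact absurd hd (by decide)
    · rw [ha, hb] at hd
      exact absurd hd (by decide)
    · rw [ha, hb, ev5, ev6]
      exact L6
    · rw [ha, hb] at hd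
      exact absurd hd (by decide)
    · rw [ha, hb] at hd
      exact absurd hd (by decide)
    · rw [ha, hb, ev5, ev9]
      exact L10
    · rw [ha, hb] at hd
      exact absurd hd (by decide)
    · rw [ha, hb] at hd
      exact absurd hd (by decide)
    · rw [ha, hb] at hd
      exact absurd hd (by decide)
    · rw [ha, hb] at hd
      exact absurd hd (by decide)
    · rw [ha, hb, ev6, ev4]
      exact L12
    · rw [ha, hb, ev6, ev5, dist_comm]
      exact L6
    · rw [ha, hb] at hd
      exact absurd hd (by decide)
    · rw [ha, hb, ev6, ev7]
      exact L7
    · rw [ha, hb] at hd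
      exact absurd hd (by decide)
    · rw [ha, hb] at hd
      exact absurd hd (by decide)
    · rw [ha, hb, ev7, ev0]
      exact L13
    · rw [ha, hb] at hd
      exact absurd hd (by decide)
    · rw [ha, hb] at hd
      exact absurd hd (by decide)
    · rw [ha, hb] at hd
      exact absurd hd (by decide)
    · rw [ha, hb] at hd
      exact absurd hd (by decide)
    · rw [ha, hb] at hd
      exact absurd hd (by decide)
    · rw [ha, hb, ev7, ev6, dist_comm]
      exact L7
    · rw [ha, hb] at hd
      exact absurd hd (by decide)
    · rw [ha, hb, ev7, ev8]
      exact L8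
    · rw [ha, hb] at hd
      exact absurd hd (by decide)
    · rw [ha, hb] at hd
      exact absurd hd (by decide)
    · rw [ha, hb, ev8, ev1]
      exact L14
    · rw [ha, hb] at hd
      exact absurd hd (by decide)
    · rw [ha, hb] at hd
      exact absurd hd (by decide)
    · rw [ha, hb] at hd
      exact absurd hd (by decide)
    · rw [ha, hb] at hd
      exact absurd hd (by decide)
    · rw [ha, hb] at hd
      exact absurd hd (by decide)
    · rw [ha, hb, ev8, ev7, dist_comm]
      exact L8
    · rw [ha, hb] at hd
      exact absurd hd (by decide)
    · rw [ha, hb, ev8, ev9]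
      exact L9
    · rw [ha, hb] at hd
      exact absurd hd (by decide)
    · rw [ha, hb] at hd
      exact absurd hd (by decide)
    · rw [ha, hb, ev9, ev2]
      exact L15
    · rw [ha, hb] at hd
      exact absurd hd (by decide)
    · rw [ha, hb] at hd
      exact absurd hd (by decide)
    · rw [ha, hb, ev9, ev5, dist_comm]
      exact L10
    · rw [ha, hb] at hd
      exact absurd hd (by decide)
    · rw [ha, hb] at hd
      exact absurd hd (by decide)
    · rw [ha, hb, ev9, ev8, dist_comm]
      exact L9
    · rw [ha, hb] at hd
      exact absurd hd (by decide)
end PetersenAux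
end

section
/- For every natural number n, the n-dimensional hypercube graph Qₙ is unit-distance embeddable: there exists an injective map f : (Fin n → Bool) → ℝ² such that dist (f x) (f y) = 1 whenever x and y differ in exactly one coordinate. -/
lemma natsum_bool_inj (n : ℕ) :
    Function.Injective (fun x : Fin n → Bool => ∑ i, if x i then 2 ^ (i : ℕ) else 0) := by
  intro x y h
  have key : ∀ z : Fin n → Bool,
      (∑ i, if z i then 2 ^ (i : ℕ) else 0) =
        ((finFunctionFinEquiv (fun i => finTwoEquiv.symm (z i)) : Fin (2 ^ n)) : ℕ) := by
    intro z
    rw [finFunctionFinEquiv_apply]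
    refine Finset.sum_congr rfl fun i _ => ?_
    cases hz : z i <;> simp [hz, finTwoEquiv]
  have h2 : finFunctionFinEquiv (fun i => finTwoEquiv.symm (x i)) =
      finFunctionFinEquiv (fun i => finTwoEquiv.symm (y i)) := by
    apply Fin.ext
    rw [← key x, ← key y]
    exact h
  have h3 := finFunctionFinEquiv.injective h2
  funext i
  have := congrFun h3 i
  exact finTwoEquiv.symm.injective this

/-- For every `n`, the hypercube graph `Qₙ` (vertices `Fin n → Bool`, adjacent iff they
differ in exactly one coordinate) is unit-distance embeddable. -/
theorem hypercube_unit_distance_embeddable (n : ℕ) :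
    ∃ f : (Fin n → Bool) → EuclideanSpace ℝ (Fin 2),
      Function.Injective f ∧
        ∀ x y : Fin n → Bool, (∃! i : Fin n, x i ≠ y i) → dist (f x) (f y) = 1 := by
  set A : Fin n → ℝ := fun i => (2:ℝ) ^ (i : ℕ) / 2 ^ n with hA
  have hA1 : ∀ i, A i ^ 2 ≤ 1 := by
    intro i
    have h1 : (2:ℝ) ^ (i : ℕ) ≤ 2 ^ n :=
      pow_le_pow_right₀ (by norm_num) (le_of_lt i.isLt)
    have hle : A i ≤ 1 := by
      rw [hA]; dsimp only; rw [div_le_one (by positivity)]; exact h1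
    have h0 : (0:ℝ) ≤ A i := by rw [hA]; positivity
    nlinarith
  set B : Fin n → ℝ := fun i => Real.sqrt (1 - A i ^ 2) with hB
  have hAB : ∀ i, A i ^ 2 + B i ^ 2 = 1 := by
    intro i
    rw [hB]; dsimp only
    rw [Real.sq_sqrt (by linarith [hA1 i])]
    ring
  set s1 : (Fin n → Bool) → ℝ := fun x => ∑ i, if x i then A i else 0 with hs1
  set s2 : (Fin n → Bool) → ℝ := fun x => ∑ i, if x i then B i else 0 with hs2
  refine ⟨fun x => !₂[s1 x, s2 x], ?_, ?_⟩
  · intro x y hxy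
    have h1 : s1 x = s1 y := congrArg (fun v : EuclideanSpace ℝ (Fin 2) => v 0) hxy
    have key : ∀ z : Fin n → Bool,
        s1 z * 2 ^ n = ((∑ i, if z i then 2 ^ (i : ℕ) else 0 : ℕ) : ℝ) := by
      intro z
      rw [hs1, hA]; dsimp only
      rw [Finset.sum_mul]
      push_cast
      refine Finset.sum_congr rfl fun i _ => ?_
      cases hz : z i <;> simp [hz] <;> field_simp
    have h2 : ((∑ i, if x i then 2 ^ (i : ℕ) else 0 : ℕ) : ℝ) =
        ((∑ i, if y i then 2 ^ (i : ℕ) else 0 : ℕ) : ℝ) := by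
      rw [← key x, ← key y, h1]
    exact natsum_bool_inj n (Nat.cast_injective h2)
  · rintro x y ⟨i0, hi0, huniq⟩
    have hxy_eq : ∀ j, j ≠ i0 → x j = y j := by
      intro j hj
      by_contra h
      exact hj (huniq j h)
    have d1 : s1 x - s1 y = (if x i0 then A i0 else 0) - (if y i0 then A i0 else 0) := by
      rw [hs1]; dsimp only; rw [← Finset.sum_sub_distrib]
      refine Finset.sum_eq_single i0 (fun j _ hj => by rw [hxy_eq j hj]; ring)
        (fun h => absurd (Finset.mem_univ i0) h)
    have d2 : s2 x - s2 y = (if x i0 then B i0 else 0) - (if y i0 then B i0 else 0) := by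
      rw [hs2]; dsimp only; rw [← Finset.sum_sub_distrib]
      refine Finset.sum_eq_single i0 (fun j _ hj => by rw [hxy_eq j hj]; ring)
        (fun h => absurd (Finset.mem_univ i0) h)
    have sq1 : (s1 x - s1 y) ^ 2 = A i0 ^ 2 := by
      rw [d1]
      cases hx : x i0 <;> cases hy : y i0 <;> simp [hx, hy] at hi0 ⊢ <;> ring
    have sq2 : (s2 x - s2 y) ^ 2 = B i0 ^ 2 := by
      rw [d2]
      cases hx : x i0 <;> cases hy : y i0 <;> simp [hx, hy] at hi0 ⊢ <;> ring
    rw [EuclideanSpace.dist_eq]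
    rw [Fin.sum_univ_two]
    simp only [PiLp.toLp_apply, Matrix.cons_val_zero, Matrix.cons_val_one, Matrix.head_cons]
    rw [Real.dist_eq, Real.dist_eq, sq_abs, sq_abs, sq1, sq2, hAB i0, Real.sqrt_one]
end

section
/- The Möbius ladder M₄ with each rung subdivided once is unit-distance embeddable: there exists an injective map f : (Fin 8 ⊕ Fin 4) → ℝ² such that dist (f u) (f v) = 1 for every edge {u, v} of the subdivided Möbius ladder. -/
/-- The Möbius ladder `M₄` with each rung subdivided once: vertices `Fin 8 ⊕ Fin 4`, cycle
edges `{inl i, inl (i+1)}` for `i : Fin 8`, and for each `k : Fin 4` the subdivided rung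
edges `{inl k, inr k}` and `{inr k, inl (k+4)}`. -/
def subdividedMobiusLadder : SimpleGraph (Fin 8 ⊕ Fin 4) :=
  SimpleGraph.fromRel (fun u v =>
    (∃ i : Fin 8, u = Sum.inl i ∧ v = Sum.inl (i + 1)) ∨
    (∃ k : Fin 4,
      (u = Sum.inl (Fin.castLE (by omega) k) ∧ v = Sum.inr k) ∨
      (u = Sum.inr k ∧ v = Sum.inl (Fin.castLE (by omega) k + 4))))

/-- A point of the plane from two coordinates. -/
noncomputable def umpPt (x y : ℝ) : EuclideanSpace ℝ (Fin 2) := !₂[x, y]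

theorem umpPt_dist (x y z w : ℝ) (h : (x - z) ^ 2 + (y - w) ^ 2 = 1) :
    dist (umpPt x y) (umpPt z w) = 1 := by
  rw [EuclideanSpace.dist_eq]
  rw [show (∑ i, dist (umpPt x y i) (umpPt z w i) ^ 2) = (x - z) ^ 2 + (y - w) ^ 2 by
    simp [Fin.sum_univ_two, umpPt, Real.dist_eq, sq_abs]]
  rw [h, Real.sqrt_one]

theorem umpPt_inj {a b c d : ℝ} (h : umpPt a b = umpPt c d) : a = c ∧ b = d := by
  constructor
  · simpa [umpPt] using congrArg (fun v => v 0) h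
  · simpa [umpPt] using congrArg (fun v => v 1) h

/-- The unit-distance embedding of the subdivided Möbius ladder. -/
noncomputable def ump : Fin 8 ⊕ Fin 4 → EuclideanSpace ℝ (Fin 2)
  | .inl 0 => umpPt 0 0
  | .inl 1 => umpPt (39/65) (-(52/65))
  | .inl 2 => umpPt (99/65) (-(27/65))
  | .inl 3 => umpPt (60/65) (25/65)
  | .inl 4 => umpPt (85/65) (-(35/65))
  | .inl 5 => umpPt (20/65) (-(35/65))
  | .inl 6 => umpPt (72/65) (4/65)
  | .inl 7 => umpPt (33/65) (56/65)
  | .inr 0 => umpPt (25/65) (-(60/65))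
  | .inr 1 => umpPt (-(13/65)) (-(91/65))
  | .inr 2 => umpPt (132/65) (29/65)
  | .inr 3 => umpPt (93/65) (81/65)

/-- The subdivided Möbius ladder `M₄` is unit-distance embeddable. -/
theorem subdividedMobiusLadder_unit_distance_embeddable :
    ∃ f : Fin 8 ⊕ Fin 4 → EuclideanSpace ℝ (Fin 2),
      Function.Injective f ∧
        ∀ u v : Fin 8 ⊕ Fin 4, subdividedMobiusLadder.Adj u v → dist (f u) (f v) = 1 := by
  refine ⟨ump, ?_, ?_⟩
  · intro a b hab
    fin_cases a <;> fin_cases b <;>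
      first
        | rfl
        | (exfalso; obtain ⟨h1, h2⟩ := umpPt_inj hab; norm_num at h1)
  · intro u v h
    fin_cases u <;> fin_cases v <;>
      first
        | (refine umpPt_dist _ _ _ _ ?_; norm_num; done)
        | (exfalso; revert h; simp only [subdividedMobiusLadder, SimpleGraph.fromRel_adj]; decide)
end

section
/- The Heawood graph minus one edge is unit-distance embeddable: there exists an injective map f : (ZMod 7 ⊕ ZMod 7) → ℝ² such that for every point i and line j with j - i ∈ {1, 2, 4}, except the single pair (i, j) = (0, 1), one has dist (f (inl i)) (f (inr j)) = 1. -/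
/-- Integer coordinates (scaled by 65) of the seven "point" vertices. -/
def heawoodPZ : Fin 7 → ℤ × ℤ :=
  ![(20, -35), (60, 25), (-52, -39), (-44, 77), (-39, 52), (-65, 0), (-48, 19)]

/-- Integer coordinates (scaled by 65) of the seven "line" vertices. -/
def heawoodLZ : Fin 7 → ℤ × ℤ :=
  ![(-104, 52), (17, 19), (-5, 25), (8, -14), (-19, 17), (21, 77), (0, 0)]

/-- Integer coordinates of all 14 vertices. -/
def heawoodZ : ZMod 7 ⊕ ZMod 7 → ℤ × ℤ :=
  Sum.elim (fun i => heawoodPZ i) (fun j => heawoodLZ j)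

lemma heawoodZ_injective : Function.Injective heawoodZ := by decide

/-- Rational coordinates of all 14 vertices. -/
def heawoodQ (v : ZMod 7 ⊕ ZMod 7) : ℚ × ℚ :=
  (((heawoodZ v).1 : ℚ) / 65, ((heawoodZ v).2 : ℚ) / 65)

noncomputable def heawoodPt (a b : ℝ) : EuclideanSpace ℝ (Fin 2) :=
  (WithLp.equiv 2 _).symm ![a, b]

noncomputable def heawoodF (v : ZMod 7 ⊕ ZMod 7) : EuclideanSpace ℝ (Fin 2) :=
  heawoodPt ((heawoodQ v).1 : ℝ) ((heawoodQ v).2 : ℝ)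

lemma heawood_dist_pt (a b c d : ℚ) (h : (a - c)^2 + (b - d)^2 = 1) :
    dist (heawoodPt (a : ℝ) (b : ℝ)) (heawoodPt (c : ℝ) (d : ℝ)) = 1 := by
  rw [EuclideanSpace.dist_eq, Fin.sum_univ_two]
  have h0 : ∀ x y : ℝ, heawoodPt x y 0 = x := fun _ _ => rfl
  have h1 : ∀ x y : ℝ, heawoodPt x y 1 = y := fun _ _ => rfl
  simp only [h0, h1, Real.dist_eq]
  rw [← Real.sqrt_one]
  congr 1
  rw [sq_abs, sq_abs]
  have : ((a:ℝ) - c)^2 + ((b:ℝ) - d)^2 = (((a - c)^2 + (b - d)^2 : ℚ) : ℝ) := by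
    push_cast; ring
  rw [this, h]; norm_num

lemma heawoodQ_unit (v w : ZMod 7 ⊕ ZMod 7)
    (h : ((heawoodZ v).1 - (heawoodZ w).1)^2 + ((heawoodZ v).2 - (heawoodZ w).2)^2 = 65^2) :
    ((heawoodQ v).1 - (heawoodQ w).1)^2 + ((heawoodQ v).2 - (heawoodQ w).2)^2 = 1 := by
  simp only [heawoodQ]
  rw [div_sub_div_same, div_sub_div_same, div_pow, div_pow, ← add_div,
    div_eq_one_iff_eq (by norm_num)]
  exact_mod_cast h

/-- The Heawood graph minus the edge between point `0` and line `1` is unit-distance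
embeddable. Here the Heawood graph is the Fano incidence graph on `ZMod 7 ⊕ ZMod 7`, with
`inl i` adjacent to `inr j` iff `j - i ∈ {1, 2, 4}`. -/
theorem heawood_minus_edge_unit_distance_embeddable :
    ∃ f : ZMod 7 ⊕ ZMod 7 → EuclideanSpace ℝ (Fin 2),
      Function.Injective f ∧
        ∀ i j : ZMod 7, (j - i = 1 ∨ j - i = 2 ∨ j - i = 4) → (i, j) ≠ (0, 1) →
          dist (f (Sum.inl i)) (f (Sum.inr j)) = 1 := by
  refine ⟨heawoodF, ?_, ?_⟩
  · intro a b hab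
    apply heawoodZ_injective
    have e0 : ((heawoodQ a).1 : ℝ) = ((heawoodQ b).1 : ℝ) := congrArg (fun x => x 0) hab
    have e1 : ((heawoodQ a).2 : ℝ) = ((heawoodQ b).2 : ℝ) := congrArg (fun x => x 1) hab
    have q0 : (heawoodQ a).1 = (heawoodQ b).1 := by exact_mod_cast e0
    have q1 : (heawoodQ a).2 = (heawoodQ b).2 := by exact_mod_cast e1
    simp only [heawoodQ] at q0 q1
    rw [div_eq_div_iff (by norm_num) (by norm_num)] at q0 q1
    have z0 : (heawoodZ a).1 = (heawoodZ b).1 := by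
      have := mul_right_cancel₀ (by norm_num : (65:ℚ) ≠ 0) q0
      exact_mod_cast this
    have z1 : (heawoodZ a).2 = (heawoodZ b).2 := by
      have := mul_right_cancel₀ (by norm_num : (65:ℚ) ≠ 0) q1
      exact_mod_cast this
    exact Prod.ext z0 z1
  · intro i j hd hne
    fin_cases i <;> fin_cases j <;>
      first
      | exact absurd hd (by decide)
      | exact absurd (by decide) hne
      | · show dist (heawoodPt _ _) (heawoodPt _ _) = 1
          exact heawood_dist_pt _ _ _ _
            (heawoodQ_unit _ _ (by decide))
end
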